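/- Let h be a real constant and let f be a C² real function on an open interval I ⊆ (0,∞). If the surface of revolution a = f(ρ) in the affine-additive group has constant horizontal mean curvature h on I, i.e., −4ρ(ρ f''(ρ) + 4(ρ²+1)f'(ρ)³ − 6 f'(ρ)² + 2 f'(ρ)) = h·(4(ρ²+1)f'(ρ)² − 4 f'(ρ) + 1)^{3/2} for all ρ ∈ I, then there exists a constant c₁ ∈ ℝ such that for all ρ ∈ I: 2(ρ²+1)f'(ρ) − 1 = (c₁ − hρ/2)·√(4(ρ²+1)f'(ρ)² − 4 f'(ρ) + 1). -/

import Mathlib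

/-- First integral of the constant horizontal mean curvature equation for
surfaces of revolution `a = f(ρ)` in the affine-additive group. -/
theorem aa_constant_horizontal_mean_curvature
    (h : ℝ) (a b : ℝ) (ha : 0 ≤ a) (f : ℝ → ℝ)
    (hf : ContDiffOn ℝ 2 f (Set.Ioo a b))
    (hH : ∀ ρ ∈ Set.Ioo a b,
      -4 * ρ * (ρ * deriv (deriv f) ρ + 4 * (ρ ^ 2 + 1) * (deriv f ρ) ^ 3 -
          6 * (deriv f ρ) ^ 2 + 2 * deriv f ρ) =
        h * (4 * (ρ ^ 2 + 1) * (deriv f ρ) ^ 2 - 4 * deriv f ρ + 1) ^ ((3 : ℝ) / 2)) :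
    ∃ c₁ : ℝ, ∀ ρ ∈ Set.Ioo a b,
      2 * (ρ ^ 2 + 1) * deriv f ρ - 1 =
        (c₁ - h * ρ / 2) *
          Real.sqrt (4 * (ρ ^ 2 + 1) * (deriv f ρ) ^ 2 - 4 * deriv f ρ + 1) := by
  rcases Set.eq_empty_or_nonempty (Set.Ioo a b) with he | ⟨ρ₀, hρ₀⟩
  · exact ⟨0, fun ρ hρ => absurd hρ (by simp [he])⟩
  set g : ℝ → ℝ := deriv f with hg
  set g' : ℝ → ℝ := deriv (deriv f) with hg'
  set D : ℝ → ℝ := fun ρ => 4 * (ρ ^ 2 + 1) * (g ρ) ^ 2 - 4 * g ρ + 1 with hD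
  set F : ℝ → ℝ := fun ρ => (2 * (ρ ^ 2 + 1) * g ρ - 1) / Real.sqrt (D ρ) + h * ρ / 2 with hF
  have hDpos : ∀ ρ ∈ Set.Ioo a b, 0 < D ρ := by
    intro ρ hρ
    have hρpos : 0 < ρ := lt_of_le_of_lt ha hρ.1
    have hsq : D ρ = (2 * ρ * g ρ) ^ 2 + (2 * g ρ - 1) ^ 2 := by
      simp only [hD]; ring
    rcases eq_or_ne (g ρ) 0 with h0 | h0
    · rw [hsq, h0]; norm_num
    · rw [hsq]
      have : 0 < (2 * ρ * g ρ) ^ 2 := by positivity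
      nlinarith [sq_nonneg (2 * g ρ - 1)]
  have hg1 : ContDiffOn ℝ 1 g (Set.Ioo a b) :=
    hf.deriv_of_isOpen isOpen_Ioo (by norm_num)
  have hgd : ∀ ρ ∈ Set.Ioo a b, HasDerivAt g (g' ρ) ρ := by
    intro ρ hρ
    exact ((hg1.differentiableOn one_ne_zero ρ hρ).differentiableAt
      (isOpen_Ioo.mem_nhds hρ)).hasDerivAt
  have key : ∀ ρ ∈ Set.Ioo a b, HasDerivAt F 0 ρ := by
    intro ρ hρ
    have hDρ := hDpos ρ hρ
    have hs : 0 < Real.sqrt (D ρ) := Real.sqrt_pos.2 hDρ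
    have hs2 : Real.sqrt (D ρ) ^ 2 = D ρ := Real.sq_sqrt hDρ.le
    have hN : HasDerivAt (fun x => 2 * (x ^ 2 + 1) * g x - 1)
        (4 * ρ * g ρ + 2 * (ρ ^ 2 + 1) * g' ρ) ρ := by
      have := ((((hasDerivAt_pow 2 ρ).add_const 1).const_mul 2).mul (hgd ρ hρ)).sub_const 1
      exact this.congr_deriv (by push_cast; ring)
    have hDd : HasDerivAt D
        (8 * ρ * (g ρ) ^ 2 + 8 * (ρ ^ 2 + 1) * g ρ * g' ρ - 4 * g' ρ) ρ := by
      have := ((((hasDerivAt_pow 2 ρ).add_const 1).const_mul 4).mul ((hgd ρ hρ).pow 2)).sub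
        ((hgd ρ hρ).const_mul 4) |>.add_const 1
      exact this.congr_deriv (by push_cast [Pi.pow_apply]; ring)
    have hS := hDd.sqrt hDρ.ne'
    have hdiv := hN.div hS hs.ne'
    have hlin : HasDerivAt (fun x : ℝ => h * x / 2) (h * 1 / 2) ρ :=
      ((hasDerivAt_id ρ).const_mul h).div_const 2
    have hFd := hdiv.add hlin
    have hval : ((4 * ρ * g ρ + 2 * (ρ ^ 2 + 1) * g' ρ) * Real.sqrt (D ρ) -
        (2 * (ρ ^ 2 + 1) * g ρ - 1) *
          ((8 * ρ * (g ρ) ^ 2 + 8 * (ρ ^ 2 + 1) * g ρ * g' ρ - 4 * g' ρ) /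
            (2 * Real.sqrt (D ρ)))) / Real.sqrt (D ρ) ^ 2 + h * 1 / 2 = 0 := by
      have h32 : Real.sqrt (D ρ) ^ 3 = (D ρ) ^ ((3 : ℝ) / 2) := by
        rw [Real.sqrt_eq_rpow, ← Real.rpow_natCast ((D ρ) ^ ((1:ℝ)/2)) 3,
          ← Real.rpow_mul hDρ.le]
        norm_num
      have hHρ := hH ρ hρ
      rw [← h32] at hHρ
      have hs2' : Real.sqrt (D ρ) ^ 2 = 4 * (ρ ^ 2 + 1) * (g ρ) ^ 2 - 4 * g ρ + 1 := hs2
      field_simp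
      linear_combination (-1 : ℝ) * hHρ +
        (2 * (4 * ρ * g ρ + 2 * (ρ ^ 2 + 1) * g' ρ)) * hs2'
    rw [hval] at hFd
    exact hFd
  have hFdiff : DifferentiableOn ℝ F (Set.Ioo a b) := fun x hx =>
    ((key x hx).differentiableAt).differentiableWithinAt
  have hf0 : ∀ x ∈ Set.Ioo a b, fderivWithin ℝ F (Set.Ioo a b) x = 0 := by
    intro x hx
    rw [fderivWithin_of_isOpen isOpen_Ioo hx, (key x hx).hasFDerivAt.fderiv]
    ext
    simp [ContinuousLinearMap.smulRight_apply]
  refine ⟨F ρ₀, fun ρ hρ => ?_⟩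
  have hconst : F ρ = F ρ₀ :=
    (convex_Ioo a b).is_const_of_fderivWithin_eq_zero hFdiff hf0 hρ hρ₀
  have hDρ := hDpos ρ hρ
  have hs : 0 < Real.sqrt (D ρ) := Real.sqrt_pos.2 hDρ
  have : (2 * (ρ ^ 2 + 1) * g ρ - 1) / Real.sqrt (D ρ) = F ρ₀ - h * ρ / 2 := by
    simp only [hF] at hconst ⊢
    linarith
  rw [div_eq_iff hs.ne'] at this
  rw [this]
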